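/- The mean first passage time under periodic resetting with period τ satisfies E[S] = E[min(T, τ)] / P(T ≤ τ). -/

import Mathlib

open MeasureTheory ProbabilityTheory
open scoped ENNReal

lemma aux_tsum_nat_mul (q : ℝ≥0∞) :
    ∑' n : ℕ, (n : ℝ≥0∞) * q ^ n = q * (∑' n : ℕ, q ^ n) * (∑' n : ℕ, q ^ n) := by
  have h1 : ∀ n : ℕ, (n : ℝ≥0∞) * q ^ n = ∑' k : ℕ, (if k < n then q ^ n else 0) := by
    intro n
    rw [tsum_eq_sum (s := Finset.range n) (fun k hk => by simp [Finset.mem_range.not.mp hk]),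
      Finset.sum_congr rfl (fun k hk => if_pos (Finset.mem_range.mp hk))]
    simp [mul_comm]
  calc ∑' n : ℕ, (n : ℝ≥0∞) * q ^ n
      = ∑' (n : ℕ) (k : ℕ), (if k < n then q ^ n else 0) := by simp_rw [h1]
    _ = ∑' (k : ℕ) (n : ℕ), (if k < n then q ^ n else 0) := ENNReal.tsum_comm
    _ = ∑' (k : ℕ), q ^ (k + 1) * ∑' n : ℕ, q ^ n := by
        refine tsum_congr fun k => ?_
        rw [← Summable.sum_add_tsum_nat_add' (f := fun n => if k < n then q ^ n else 0) (k := k + 1)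
          ENNReal.summable]
        have : ∀ i ∈ Finset.range (k + 1), (if k < i then q ^ i else 0) = 0 := by
          intro i hi; simp [Nat.not_lt.mpr (Nat.lt_succ_iff.mp (Finset.mem_range.mp hi))]
        rw [Finset.sum_congr rfl this]
        simp only [Finset.sum_const_zero, zero_add]
        rw [← ENNReal.tsum_mul_left]
        refine tsum_congr fun n => ?_
        rw [if_pos (by omega)]
        ring
    _ = q * (∑' n : ℕ, q ^ n) * (∑' n : ℕ, q ^ n) := by
        rw [ENNReal.tsum_mul_right]
        congr 1
        rw [← ENNReal.tsum_mul_left]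
        exact tsum_congr fun k => by rw [pow_succ']

theorem stmt13 {Ω : Type*} [MeasurableSpace Ω] (μ : Measure Ω) [IsProbabilityMeasure μ]
    (T : Ω → ℝ) (hTm : Measurable T) (hTnn : ∀ ω, 0 ≤ T ω)
    (τ : ℝ) (hτ : 0 < τ) (hpos : 0 < μ {ω | T ω ≤ τ})
    (Tseq : ℕ → Ω → ℝ)
    (hTseqm : ∀ n, Measurable (Tseq n))
    (hiid : iIndepFun Tseq μ)
    (hTdist : ∀ n, IdentDistrib (Tseq n) T μ μ)
    (N : Ω → ℕ) (hN : ∀ ω, N ω = sInf {n | Tseq n ω ≤ τ})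
    (hNfin : ∀ᵐ ω ∂μ, ∃ n, Tseq n ω ≤ τ)
    (S : Ω → ℝ)
    (hS : ∀ ω, S ω = (N ω : ℝ) * τ + Tseq (N ω) ω) :
    ∫ ω, S ω ∂μ = (∫ ω, min (T ω) τ ∂μ) / (μ {ω | T ω ≤ τ}).toReal := by
  classical
  have hsIic : MeasurableSet (Set.Iic τ) := measurableSet_Iic
  have hsIoi : MeasurableSet (Set.Ioi τ) := measurableSet_Ioi
  have hmTle : MeasurableSet {ω | T ω ≤ τ} := hTm hsIic
  set p : ℝ≥0∞ := μ {ω | T ω ≤ τ} with hp_def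
  set q : ℝ≥0∞ := μ {ω | τ < T ω} with hq_def
  set t : ℝ≥0∞ := ENNReal.ofReal τ with ht_def
  have ht_ne_top : t ≠ ∞ := ENNReal.ofReal_ne_top
  have hpq : q = 1 - p := by
    rw [hq_def, hp_def]
    have h : {ω | τ < T ω} = {ω | T ω ≤ τ}ᶜ := by ext ω; simp [not_le]
    rw [h, prob_compl_eq_one_sub hmTle]
  have hp_le_one : p ≤ 1 := prob_le_one
  have hp_ne_top : p ≠ ∞ := (lt_of_le_of_lt hp_le_one ENNReal.one_lt_top).ne
  have hp_ne_zero : p ≠ 0 := hpos.ne'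
  have h1q : 1 - q = p := by rw [hpq, ENNReal.sub_sub_cancel ENNReal.one_ne_top hp_le_one]
  have hG : ∑' n : ℕ, q ^ n = p⁻¹ := by rw [ENNReal.tsum_geometric, h1q]
  -- distribution transfers
  have hmap : ∀ n, Measure.map (Tseq n) μ = Measure.map T μ := fun n => (hTdist n).map_eq
  have htransfer : ∀ (n : ℕ) (ψ : ℝ → ℝ≥0∞), Measurable ψ →
      ∫⁻ ω, ψ (Tseq n ω) ∂μ = ∫⁻ ω, ψ (T ω) ∂μ := by
    intro n ψ hψ
    rw [← lintegral_map hψ (hTseqm n), hmap n, lintegral_map hψ hTm]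
  have hTseq_nn : ∀ n, ∀ᵐ ω ∂μ, 0 ≤ Tseq n ω := by
    intro n
    have h0 : μ (T ⁻¹' Set.Iio 0) = 0 := by
      have he : T ⁻¹' Set.Iio 0 = ∅ := by
        ext ω; simp [Set.mem_preimage, not_lt.mpr (hTnn ω)]
      simp [he]
    have := (hTdist n).measure_mem_eq measurableSet_Iio (s := Set.Iio 0)
    rw [ae_iff]
    have hset : {ω | ¬ 0 ≤ Tseq n ω} = Tseq n ⁻¹' Set.Iio 0 := by
      ext ω; simp [not_le]
    rw [hset, this, h0]
  -- the basic sets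
  set E : ℕ → Set Ω := fun n => Tseq n ⁻¹' Set.Iic τ with hE_def
  set B : ℕ → Set Ω := fun n => ⋂ i ∈ Finset.range n, Tseq i ⁻¹' Set.Ioi τ with hB_def
  have hEmeas : ∀ n, MeasurableSet (E n) := fun n => (hTseqm n) hsIic
  have hBmeas : ∀ n, MeasurableSet (B n) :=
    fun n => Finset.measurableSet_biInter _ (fun i _ => (hTseqm i) hsIoi)
  have hBmem : ∀ n ω, ω ∈ B n ↔ ∀ i < n, τ < Tseq i ω := by
    intro n ω
    simp [hB_def, Set.mem_iInter, Finset.mem_range]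
  set A : ℕ → Set Ω := fun n => B n ∩ E n with hA_def
  have hAmeas : ∀ n, MeasurableSet (A n) := fun n => (hBmeas n).inter (hEmeas n)
  -- helper: indicator composition/multiplication identities
  have hcomp : ∀ (f : Ω → ℝ) (s : Set ℝ) (g : ℝ → ℝ≥0∞) (ω : Ω),
      s.indicator g (f ω) = (f ⁻¹' s).indicator (fun ω => g (f ω)) ω := by
    intro f s g ω; by_cases h : f ω ∈ s <;> simp [h]
  have hmul : ∀ (s u : Set Ω) (h : Ω → ℝ≥0∞) (ω : Ω),
      s.indicator 1 ω * u.indicator h ω = (s ∩ u).indicator h ω := by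
    intro s u h ω
    by_cases hs : ω ∈ s <;> by_cases hu : ω ∈ u <;>
      simp [hs, hu, Set.indicator_of_mem, Set.indicator_of_notMem]
  -- key independence lemma
  have key : ∀ (n : ℕ) (ψ : ℝ → ℝ≥0∞), Measurable ψ →
      ∫⁻ ω, (B n).indicator 1 ω * ψ (Tseq n ω) ∂μ = μ (B n) * ∫⁻ ω, ψ (T ω) ∂μ := by
    intro n ψ hψ
    have hdisj : Disjoint (Finset.range n) ({n} : Finset ℕ) := by
      simp [Finset.disjoint_singleton_right]
    have hind0 := hiid.indepFun_finset (Finset.range n) {n} hdisj hTseqm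
    set Φ : ((i : (Finset.range n : Finset ℕ)) → ℝ) → ℝ≥0∞ :=
      ({x | ∀ i : (Finset.range n : Finset ℕ), τ < x i}).indicator 1 with hΦ_def
    have hΦm : Measurable Φ := by
      apply Measurable.indicator measurable_const
      have hset : {x : (i : (Finset.range n : Finset ℕ)) → ℝ | ∀ i, τ < x i}
          = ⋂ i, (fun x => x i) ⁻¹' Set.Ioi τ := by ext x; simp
      rw [hset]
      exact MeasurableSet.iInter fun i => (measurable_pi_apply i) hsIoi
    set Ψ : ((i : ({n} : Finset ℕ)) → ℝ) → ℝ≥0∞ :=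
      fun x => ψ (x ⟨n, Finset.mem_singleton_self n⟩) with hΨ_def
    have hΨm : Measurable Ψ := hψ.comp (measurable_pi_apply _)
    have hind := hind0.comp hΦm hΨm
    have heq1 : Φ ∘ (fun a (i : (Finset.range n : Finset ℕ)) => Tseq i a)
        = (B n).indicator 1 := by
      funext a
      simp only [Function.comp_apply]
      by_cases h : a ∈ B n
      · have h' : (fun (i : (Finset.range n : Finset ℕ)) => Tseq i a)
            ∈ {x | ∀ i : (Finset.range n : Finset ℕ), τ < x i} :=
          fun i => (hBmem n a).mp h i (Finset.mem_range.mp i.2)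
        rw [hΦ_def, Set.indicator_of_mem h', Set.indicator_of_mem h]
        rfl
      · have h' : (fun (i : (Finset.range n : Finset ℕ)) => Tseq i a)
            ∉ {x | ∀ i : (Finset.range n : Finset ℕ), τ < x i} := by
          intro hx
          exact h ((hBmem n a).mpr fun i hi => hx ⟨i, Finset.mem_range.mpr hi⟩)
        rw [hΦ_def, Set.indicator_of_notMem h', Set.indicator_of_notMem h]
    have heq2 : Ψ ∘ (fun a (i : ({n} : Finset ℕ)) => Tseq i a)
        = fun ω => ψ (Tseq n ω) := rfl
    rw [heq1, heq2] at hind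
    calc ∫⁻ ω, (B n).indicator 1 ω * ψ (Tseq n ω) ∂μ
        = ∫⁻ ω, ((B n).indicator 1 * fun ω => ψ (Tseq n ω) : Ω → ℝ≥0∞) ω ∂μ := rfl
      _ = (∫⁻ ω, (B n).indicator 1 ω ∂μ) * ∫⁻ ω, (ψ ∘ Tseq n) ω ∂μ :=
          lintegral_mul_eq_lintegral_mul_lintegral_of_indepFun
            (measurable_one.indicator (hBmeas n)) (hψ.comp (hTseqm n)) hind
      _ = μ (B n) * ∫⁻ ω, ψ (T ω) ∂μ := by
          rw [lintegral_indicator_one (hBmeas n)]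
          exact congrArg _ (htransfer n ψ hψ)
  -- measure of B n
  have hBsucc : ∀ n, B (n + 1) = B n ∩ Tseq n ⁻¹' Set.Ioi τ := by
    intro n
    ext ω
    rw [hBmem (n+1) ω, Set.mem_inter_iff, hBmem n ω]
    constructor
    · intro h; exact ⟨fun i hi => h i (by omega), h n (by omega)⟩
    · rintro ⟨h1, h2⟩ i hi
      rcases Nat.lt_succ_iff_lt_or_eq.mp hi with h | rfl
      · exact h1 i h
      · exact h2
  have hBn : ∀ n, μ (B n) = q ^ n := by
    intro n
    induction n with
    | zero =>
      have : B 0 = Set.univ := by simp [hB_def]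
      simp [this]
    | succ n ih =>
      have hkey := key n ((Set.Ioi τ).indicator 1) (measurable_one.indicator hsIoi)
      have hptws : ∀ ω, (B n).indicator 1 ω * (Set.Ioi τ).indicator 1 (Tseq n ω)
          = (B (n+1)).indicator (1 : Ω → ℝ≥0∞) ω := by
        intro ω
        rw [hcomp (Tseq n) (Set.Ioi τ) 1 ω, hBsucc n]
        exact hmul _ _ _ ω
      have hT2 : ∀ ω, (Set.Ioi τ).indicator (1 : ℝ → ℝ≥0∞) (T ω)
          = (T ⁻¹' Set.Ioi τ).indicator (1 : Ω → ℝ≥0∞) ω := fun ω => hcomp T _ _ ω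
      rw [lintegral_congr hptws, lintegral_congr hT2, lintegral_indicator_one (hBmeas (n+1)),
        lintegral_indicator_one (hTm hsIoi)] at hkey
      have hq' : μ (T ⁻¹' Set.Ioi τ) = q := rfl
      rw [hkey, ih, hq', pow_succ]
  have hAn : ∀ n, μ (A n) = q ^ n * p := by
    intro n
    have hkey := key n ((Set.Iic τ).indicator 1) (measurable_one.indicator hsIic)
    have hptws : ∀ ω, (B n).indicator 1 ω * (Set.Iic τ).indicator 1 (Tseq n ω)
        = (A n).indicator (1 : Ω → ℝ≥0∞) ω := by
      intro ω
      rw [hcomp (Tseq n) (Set.Iic τ) 1 ω]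
      exact hmul _ _ _ ω
    have hT2 : ∀ ω, (Set.Iic τ).indicator (1 : ℝ → ℝ≥0∞) (T ω)
        = (T ⁻¹' Set.Iic τ).indicator (1 : Ω → ℝ≥0∞) ω := fun ω => hcomp T _ _ ω
    rw [lintegral_congr hptws, lintegral_congr hT2, lintegral_indicator_one (hAmeas n),
      lintegral_indicator_one (hTm hsIic)] at hkey
    have hp' : μ (T ⁻¹' Set.Iic τ) = p := rfl
    rw [hkey, hBn n, hp']
  set c : ℝ≥0∞ := ∫⁻ ω in {ω | T ω ≤ τ}, ENNReal.ofReal (T ω) ∂μ with hc_def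
  have hInt : ∀ n, ∫⁻ ω in A n, ENNReal.ofReal (Tseq n ω) ∂μ = q ^ n * c := by
    intro n
    have hψm : Measurable ((Set.Iic τ).indicator ENNReal.ofReal) :=
      ENNReal.measurable_ofReal.indicator hsIic
    have hkey := key n ((Set.Iic τ).indicator ENNReal.ofReal) hψm
    have hptws : ∀ ω, (B n).indicator 1 ω * (Set.Iic τ).indicator ENNReal.ofReal (Tseq n ω)
        = (A n).indicator (fun ω => ENNReal.ofReal (Tseq n ω)) ω := by
      intro ω
      rw [hcomp (Tseq n) (Set.Iic τ) ENNReal.ofReal ω]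
      exact hmul _ _ _ ω
    have hT2 : ∀ ω, (Set.Iic τ).indicator ENNReal.ofReal (T ω)
        = ({ω | T ω ≤ τ}).indicator (fun ω => ENNReal.ofReal (T ω)) ω :=
      fun ω => hcomp T _ _ ω
    rw [lintegral_congr hptws, lintegral_congr hT2, lintegral_indicator (hAmeas n),
      lintegral_indicator hmTle] at hkey
    rw [hkey, hBn n]
  -- N on A n
  have hNA : ∀ n ω, ω ∈ A n → N ω = n := by
    intro n ω hω
    obtain ⟨hB, hE⟩ := hω
    have hE' : n ∈ {m | Tseq m ω ≤ τ} := hE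
    rw [hN ω]
    refine le_antisymm (Nat.sInf_le hE') ?_
    by_contra hlt
    push_neg at hlt
    have hmem := Nat.sInf_mem (⟨n, hE'⟩ : {m | Tseq m ω ≤ τ}.Nonempty)
    have hgt := (hBmem n ω).mp hB _ hlt
    exact absurd hmem (not_le.mpr hgt)
  set U : Set Ω := {ω | ∃ n, Tseq n ω ≤ τ} with hU_def
  have hUA : U = ⋃ n, A n := by
    ext ω
    constructor
    · rintro ⟨m, hm⟩
      have hne : {k | Tseq k ω ≤ τ}.Nonempty := ⟨m, hm⟩
      refine Set.mem_iUnion.mpr ⟨sInf {k | Tseq k ω ≤ τ}, ?_, Nat.sInf_mem hne⟩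
      exact (hBmem _ ω).mpr fun i hi => not_le.mp (Nat.notMem_of_lt_sInf hi)
    · intro hω
      obtain ⟨n, hn⟩ := Set.mem_iUnion.mp hω
      exact ⟨n, hn.2⟩
  have hUmeas : MeasurableSet U := hUA ▸ MeasurableSet.iUnion hAmeas
  have hUc : μ Uᶜ = 0 := by
    have h := hNfin
    rw [ae_iff] at h
    have : Uᶜ = {ω | ¬ ∃ n, Tseq n ω ≤ τ} := rfl
    rw [this]
    exact h
  have hdisjA : Pairwise (Function.onFun Disjoint A) := by
    intro m n hmn
    refine Set.disjoint_left.mpr fun ω hm hn' => hmn ?_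
    rw [← hNA m ω hm, ← hNA n ω hn']
  have hNpre : ∀ n, N ⁻¹' {n} = A n ∪ (if n = 0 then Uᶜ else ∅) := by
    intro n
    ext ω
    simp only [Set.mem_preimage, Set.mem_singleton_iff, Set.mem_union]
    constructor
    · intro h
      by_cases hU : ω ∈ U
      · left
        obtain ⟨m, hm⟩ := hU
        have hne : {k | Tseq k ω ≤ τ}.Nonempty := ⟨m, hm⟩
        have hmem := Nat.sInf_mem hne
        have hsinf : sInf {k | Tseq k ω ≤ τ} = n := by rw [← hN ω]; exact h
        rw [hsinf] at hmem
        refine ⟨(hBmem n ω).mpr fun i hi => ?_, hmem⟩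
        have hnm : i ∉ {k | Tseq k ω ≤ τ} := Nat.notMem_of_lt_sInf (by rw [hsinf]; exact hi)
        exact not_le.mp hnm
      · right
        have hempty : {k | Tseq k ω ≤ τ} = ∅ := by
          ext k
          simp only [Set.mem_setOf_eq, Set.mem_empty_iff_false, iff_false]
          exact fun hk => hU ⟨k, hk⟩
        have hn0 : n = 0 := by rw [← h, hN ω, hempty, Nat.sInf_empty]
        rw [hn0, if_pos rfl]
        exact hU
    · intro h
      rcases h with h | h
      · exact hNA n ω h
      · by_cases h0 : n = 0
        · subst h0
          rw [if_pos rfl] at h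
          have hempty : {k | Tseq k ω ≤ τ} = ∅ := by
            ext k
            simp only [Set.mem_setOf_eq, Set.mem_empty_iff_false, iff_false]
            exact fun hk => h ⟨k, hk⟩
          rw [hN ω, hempty, Nat.sInf_empty]
        · rw [if_neg h0] at h
          exact absurd h (Set.notMem_empty ω)
  have hNmeas : Measurable N := by
    apply measurable_to_countable'
    intro n
    rw [hNpre n]
    refine (hAmeas n).union ?_
    by_cases h0 : n = 0
    · rw [if_pos h0]; exact hUmeas.compl
    · rw [if_neg h0]; exact MeasurableSet.empty
  have hSmeas : Measurable S := by
    have hrepr : S = (fun pr : Ω × ℕ => (pr.2 : ℝ) * τ + Tseq pr.2 pr.1)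
        ∘ (fun ω => (ω, N ω)) := by
      funext ω; exact hS ω
    rw [hrepr]
    refine (measurable_from_prod_countable_left
      (f := fun pr : Ω × ℕ => (pr.2 : ℝ) * τ + Tseq pr.2 pr.1) fun n => ?_).comp
      (measurable_id.prodMk hNmeas)
    show Measurable fun x : Ω => (n : ℝ) * τ + Tseq n x
    exact measurable_const.add (hTseqm n)
  -- decomposition of the lintegral
  have hdecomp : ∫⁻ ω, ENNReal.ofReal (S ω) ∂μ
      = ∑' n, ∫⁻ ω in A n, ENNReal.ofReal (S ω) ∂μ := by
    calc ∫⁻ ω, ENNReal.ofReal (S ω) ∂μ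
        = (∫⁻ ω in U, ENNReal.ofReal (S ω) ∂μ) + ∫⁻ ω in Uᶜ, ENNReal.ofReal (S ω) ∂μ :=
          (lintegral_add_compl _ hUmeas).symm
      _ = ∫⁻ ω in ⋃ n, A n, ENNReal.ofReal (S ω) ∂μ := by
          rw [setLIntegral_measure_zero _ _ hUc, add_zero, hUA]
      _ = ∑' n, ∫⁻ ω in A n, ENNReal.ofReal (S ω) ∂μ := lintegral_iUnion hAmeas hdisjA _
  have hterm : ∀ n, ∫⁻ ω in A n, ENNReal.ofReal (S ω) ∂μ
      = (n : ℝ≥0∞) * t * (q ^ n * p) + q ^ n * c := by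
    intro n
    have h1 : ∫⁻ ω in A n, ENNReal.ofReal (S ω) ∂μ
        = ∫⁻ ω in A n, (ENNReal.ofReal ((n : ℝ) * τ) + ENNReal.ofReal (Tseq n ω)) ∂μ := by
      refine lintegral_congr_ae ?_
      filter_upwards [ae_restrict_mem (hAmeas n), ae_restrict_of_ae (hTseq_nn n)] with ω hωA hω0
      rw [hS ω, hNA n ω hωA, ENNReal.ofReal_add (mul_nonneg (Nat.cast_nonneg n) hτ.le) hω0]
    rw [h1, lintegral_add_left measurable_const, setLIntegral_const, hAn n, hInt n,
      ENNReal.ofReal_mul (Nat.cast_nonneg n), ENNReal.ofReal_natCast]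
  have htot : ∫⁻ ω, ENNReal.ofReal (S ω) ∂μ = p⁻¹ * (c + t * q) := by
    rw [hdecomp]
    calc ∑' n, ∫⁻ ω in A n, ENNReal.ofReal (S ω) ∂μ
        = ∑' n : ℕ, ((n : ℝ≥0∞) * q ^ n * (t * p) + q ^ n * c) := by
          refine tsum_congr fun n => ?_
          rw [hterm n]; ring
      _ = (∑' n : ℕ, (n : ℝ≥0∞) * q ^ n) * (t * p) + (∑' n : ℕ, q ^ n) * c := by
          rw [ENNReal.tsum_add, ENNReal.tsum_mul_right, ENNReal.tsum_mul_right]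
      _ = q * p⁻¹ * p⁻¹ * (t * p) + p⁻¹ * c := by rw [aux_tsum_nat_mul, hG]
      _ = p⁻¹ * (t * q) * (p⁻¹ * p) + p⁻¹ * c := by ring
      _ = p⁻¹ * (c + t * q) := by
          rw [ENNReal.inv_mul_cancel hp_ne_zero hp_ne_top, mul_one]
          ring
  have hK : ∫⁻ ω, ENNReal.ofReal (min (T ω) τ) ∂μ = c + t * q := by
    rw [← lintegral_add_compl (fun ω => ENNReal.ofReal (min (T ω) τ)) hmTle]
    congr 1
    · rw [hc_def]
      refine setLIntegral_congr_fun hmTle ?_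
      exact fun ω hω => by rw [min_eq_left hω]
    · have hcompl_eq : {ω | T ω ≤ τ}ᶜ = {ω | τ < T ω} := by ext ω; simp [not_le]
      rw [hcompl_eq]
      have : ∫⁻ ω in {ω | τ < T ω}, ENNReal.ofReal (min (T ω) τ) ∂μ
          = ∫⁻ _ in {ω | τ < T ω}, t ∂μ := by
        refine setLIntegral_congr_fun (hTm hsIoi) ?_
        exact fun ω hω => by
          rw [min_eq_right (le_of_lt hω)]
      rw [this, setLIntegral_const, mul_comm]
  have hSnn : 0 ≤ᵐ[μ] S := by
    filter_upwards [ae_all_iff.mpr hTseq_nn] with ω hω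
    rw [hS ω]
    exact add_nonneg (mul_nonneg (Nat.cast_nonneg _) hτ.le) (hω (N ω))
  have hminnn : 0 ≤ᵐ[μ] fun ω => min (T ω) τ :=
    Filter.Eventually.of_forall fun ω => le_min (hTnn ω) hτ.le
  rw [integral_eq_lintegral_of_nonneg_ae hSnn hSmeas.aestronglyMeasurable,
    integral_eq_lintegral_of_nonneg_ae hminnn ((hTm.min measurable_const).aestronglyMeasurable),
    htot, hK, ENNReal.toReal_mul, ENNReal.toReal_inv, div_eq_mul_inv, mul_comm]
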